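/- arXiv:1108.1578 — 6 statements merged into one kernel-verified Lean document; each statement's English description precedes it below -/
import Mathlib

section
/- Let G be a finite additive abelian group with |G| = N, let g, h : G → [0,1] with E g = θ, and let δ₁ > 0. If g − h is δ₁-uniform, then Σ_{x ∈ G} |g*g(x) − h*h(x)|² ≤ δ₁²(4θ + δ₁)N³. -/
open Finset
open scoped Classical Pointwise

/-- The unnormalized convolution `f*g(x) = Σ_{a+b=x} f(a)g(b)`. -/
def convR {G : Type*} [AddCommGroup G] [Fintype G] (f g : G → ℝ) (x : G) : ℝ :=
  ∑ a : G, f a * g (x - a)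

/-- The unnormalized Fourier transform `f̂(χ) = Σ_x f(x)χ(x)` of a real-valued function. -/
noncomputable def ft {G : Type*} [AddCommGroup G] [Fintype G] (f : G → ℝ) (χ : AddChar G ℂ) : ℂ :=
  ∑ x : G, (f x : ℂ) * χ x

/-- `f` is `α`-uniform if `|f̂(χ)| ≤ α·N` for every character `χ`. -/
def IsUniform {G : Type*} [AddCommGroup G] [Fintype G] (f : G → ℝ) (α : ℝ) : Prop :=
  ∀ χ : AddChar G ℂ, ‖ft f χ‖ ≤ α * (Fintype.card G)

/-- Indicator function of a finite set. -/
noncomputable def indR {G : Type*} (A : Finset G) : G → ℝ := fun x => if x ∈ A then 1 else 0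

/-- The Bohr neighborhood `B(Λ, ε) = {x : |1 − χ(x)| ≤ ε for all χ ∈ Λ}`. -/
noncomputable def bohr {G : Type*} [AddCommGroup G] [Fintype G]
    (Λ : Finset (AddChar G ℂ)) (ε : ℝ) : Finset G :=
  Finset.univ.filter fun x => ∀ χ ∈ Λ, ‖1 - χ x‖ ≤ ε

section lems
variable {G : Type*} [AddCommGroup G] [Fintype G]

lemma ft_conv (f₁ f₂ : G → ℝ) (χ : AddChar G ℂ) :
    ft (convR f₁ f₂) χ = ft f₁ χ * ft f₂ χ := by
  unfold ft convR
  rw [Finset.sum_mul_sum]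
  push_cast
  simp_rw [Finset.sum_mul]
  rw [Finset.sum_comm]
  refine Finset.sum_congr rfl fun a _ => ?_
  rw [← Equiv.sum_comp (Equiv.addLeft a)]
  refine Finset.sum_congr rfl fun b _ => ?_
  simp [AddChar.map_add_eq_mul]
  ring

lemma parsevalC (f : G → ℝ) :
    ∑ χ : AddChar G ℂ, ((Complex.normSq (ft f χ) : ℝ) : ℂ)
      = (Fintype.card G : ℂ) * ∑ x : G, ((f x : ℂ))^2 := by
  classical
  calc ∑ χ : AddChar G ℂ, ((Complex.normSq (ft f χ) : ℝ) : ℂ)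
      = ∑ χ : AddChar G ℂ, ft f χ * (starRingEnd ℂ) (ft f χ) := by
        simp [Complex.mul_conj]
    _ = ∑ χ : AddChar G ℂ, ∑ x : G, ∑ y : G, (f x : ℂ) * f y * χ (x - y) := by
        refine Finset.sum_congr rfl fun χ _ => ?_
        unfold ft
        rw [map_sum, Finset.sum_mul_sum]
        refine Finset.sum_congr rfl fun x _ => Finset.sum_congr rfl fun y _ => ?_
        rw [map_mul, Complex.conj_ofReal, ← AddChar.map_neg_eq_conj, sub_eq_add_neg,
          AddChar.map_add_eq_mul]
        ring
    _ = ∑ x : G, ∑ y : G, (f x : ℂ) * f y * ∑ χ : AddChar G ℂ, χ (x - y) := by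
        rw [Finset.sum_comm]
        refine Finset.sum_congr rfl fun x _ => ?_
        rw [Finset.sum_comm]
        simp [Finset.mul_sum]
    _ = (Fintype.card G : ℂ) * ∑ x : G, ((f x : ℂ))^2 := by
        simp_rw [AddChar.sum_apply_eq_ite, sub_eq_zero]
        rw [Finset.mul_sum]
        refine Finset.sum_congr rfl fun x _ => ?_
        rw [Finset.sum_eq_single x]
        · simp; ring
        · intro y _ hy; simp [Ne.symm hy]
        · simp

lemma parseval (f : G → ℝ) :
    ∑ χ : AddChar G ℂ, Complex.normSq (ft f χ) = (Fintype.card G : ℝ) * ∑ x : G, (f x)^2 := by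
  have := parsevalC f
  exact_mod_cast this

lemma convR_comm (f₁ f₂ : G → ℝ) (x : G) : convR f₁ f₂ x = convR f₂ f₁ x := by
  unfold convR
  rw [← Equiv.sum_comp (Equiv.subLeft x)]
  refine Finset.sum_congr rfl fun a _ => ?_
  simp [Equiv.subLeft, mul_comm]

end lems

/-- If `g − h` is `δ₁`-uniform then `Σ_x |g*g(x) − h*h(x)|² ≤ δ₁²(4θ + δ₁)N³`. -/
theorem convolutions_uniformity {G : Type*} [AddCommGroup G] [Fintype G] (N : ℕ)
    (hN : Fintype.card G = N)
    (g h : G → ℝ) (hg : ∀ x, g x ∈ Set.Icc (0 : ℝ) 1) (hh : ∀ x, h x ∈ Set.Icc (0 : ℝ) 1)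
    (θ δ₁ : ℝ) (hθ : (∑ x : G, g x) / N = θ) (hδ₁ : 0 < δ₁)
    (hu : IsUniform (g - h) δ₁) :
    ∑ x : G, |convR g g x - convR h h x| ^ 2 ≤ δ₁ ^ 2 * (4 * θ + δ₁) * (N : ℝ) ^ 3 := by
  classical
  have hNpos : 0 < N := hN ▸ Fintype.card_pos
  have hNR : (0:ℝ) < N := Nat.cast_pos.mpr hNpos
  have hgsum : ∑ x : G, g x = θ * N := by
    field_simp at hθ; linarith
  have htriv : |∑ x : G, (g x - h x)| ≤ δ₁ * N := by
    have H := hu 0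
    rw [hN] at H
    unfold ft at H
    simp only [Pi.sub_apply, AddChar.zero_apply, mul_one] at H
    rw [← Complex.ofReal_sum, Complex.norm_real, Real.norm_eq_abs] at H
    exact H
  have hhsum : ∑ x : G, h x ≤ θ * N + δ₁ * N := by
    have H := (abs_le.mp htriv).1
    rw [Finset.sum_sub_distrib] at H
    linarith
  have hs2 : ∑ x : G, ((g + h) x)^2 ≤ (4*θ + δ₁) * N := by
    have term : ∀ x : G, ((g + h) x)^2 ≤ 3 * g x + h x := by
      intro x
      obtain ⟨hg0, hg1⟩ := hg x
      obtain ⟨hh0, hh1⟩ := hh x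
      simp only [Pi.add_apply]
      nlinarith
    calc ∑ x : G, ((g + h) x)^2 ≤ ∑ x : G, (3 * g x + h x) :=
          Finset.sum_le_sum fun x _ => term x
      _ = 3 * (∑ x : G, g x) + ∑ x : G, h x := by
          rw [Finset.sum_add_distrib, Finset.mul_sum]
      _ ≤ 3 * (θ * N) + (θ * N + δ₁ * N) := by
          rw [hgsum]; linarith
      _ = (4*θ + δ₁) * N := by ring
  have hconv : ∀ x, convR (g - h) (g + h) x = convR g g x - convR h h x := by
    intro x
    have expand : convR (g - h) (g + h) x
        = convR g g x + convR g h x - convR h g x - convR h h x := by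
      unfold convR
      simp only [Pi.sub_apply, Pi.add_apply]
      rw [← Finset.sum_add_distrib, ← Finset.sum_sub_distrib, ← Finset.sum_sub_distrib]
      exact Finset.sum_congr rfl fun a _ => by ring
    rw [expand, convR_comm g h]; ring
  have hud : ∀ χ : AddChar G ℂ, Complex.normSq (ft (g - h) χ) ≤ (δ₁ * N)^2 := by
    intro χ
    have H := hu χ
    rw [hN] at H
    rw [← Complex.sq_norm]
    have h0 : 0 ≤ ‖ft (g - h) χ‖ := norm_nonneg _
    nlinarith
  have key : (N:ℝ) * ∑ x : G, (convR (g - h) (g + h) x)^2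
      ≤ (δ₁ * N)^2 * ((N:ℝ) * ∑ x : G, ((g + h) x)^2) := by
    have p1 := parseval (G := G) (convR (g - h) (g + h))
    have p2 := parseval (G := G) (g + h)
    rw [hN] at p1 p2
    rw [← p1, ← p2, Finset.mul_sum]
    refine Finset.sum_le_sum fun χ _ => ?_
    rw [ft_conv, Complex.normSq_mul]
    exact mul_le_mul_of_nonneg_right (hud χ) (Complex.normSq_nonneg _)
  have habs : ∑ x : G, |convR g g x - convR h h x| ^ 2
      = ∑ x : G, (convR (g - h) (g + h) x)^2 := by
    refine Finset.sum_congr rfl fun x _ => ?_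
    rw [hconv x, sq_abs]
  rw [habs]
  have final : (N:ℝ) * ∑ x : G, (convR (g - h) (g + h) x)^2
      ≤ (N:ℝ) * (δ₁ ^ 2 * (4 * θ + δ₁) * (N : ℝ) ^ 3) := by
    refine key.trans ?_
    have : (δ₁ * N)^2 * ((N:ℝ) * ∑ x : G, ((g + h) x)^2)
        ≤ (δ₁ * N)^2 * ((N:ℝ) * ((4*θ + δ₁) * N)) := by
      refine mul_le_mul_of_nonneg_left ?_ (sq_nonneg _)
      exact mul_le_mul_of_nonneg_left hs2 hNR.le
    refine this.trans (le_of_eq ?_)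
    ring
  exact le_of_mul_le_mul_left final hNR
end

section
/- Let N be a prime, let Λ be a set of d characters of ℤ_N, and let r ∈ [0,2]. Then the Bohr neighborhood B(Λ, r) in ℤ_N contains an arithmetic progression of length at least r·N^{1/d}/(2π). -/
open Finset
open scoped Classical Pointwise

noncomputable def EE (N : ℕ) (k : ℤ) : ℂ := Complex.exp (2 * Real.pi * k / N * Complex.I)

lemma EE_eq_exp_real (N : ℕ) (k : ℤ) :
    EE N k = Complex.exp (((2 * Real.pi * k / N : ℝ) : ℂ) * Complex.I) := by
  unfold EE; push_cast; ring_nf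

lemma abs_EE (N : ℕ) (k : ℤ) : ‖EE N k‖ = 1 := by
  rw [EE_eq_exp_real]; exact Complex.norm_exp_ofReal_mul_I _

lemma EE_congr (N : ℕ) [NeZero N] {a b : ℤ} (h : (a : ZMod N) = (b : ZMod N)) :
    EE N a = EE N b := by
  have hmod : a ≡ b [ZMOD N] := (ZMod.intCast_eq_intCast_iff a b N).mp h
  obtain ⟨c, hc⟩ : (N : ℤ) ∣ b - a := Int.ModEq.dvd hmod
  have hb : b = a + N * c := by linarith
  have hN : (N : ℂ) ≠ 0 := by exact_mod_cast (NeZero.ne N)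
  unfold EE
  rw [hb]
  push_cast
  rw [show 2 * Real.pi * ((a : ℂ) + N * c) / N * Complex.I
      = 2 * Real.pi * a / N * Complex.I + c * (2 * Real.pi * Complex.I) by field_simp]
  rw [Complex.exp_add, Complex.exp_int_mul_two_pi_mul_I, mul_one]

lemma abs_one_sub_exp (θ : ℝ) :
    ‖1 - Complex.exp ((θ : ℂ) * Complex.I)‖ ≤ |θ| := by
  have h2 : Complex.exp (((-(θ/2) : ℝ) : ℂ) * Complex.I)
        - Complex.exp (((θ/2 : ℝ) : ℂ) * Complex.I)
      = -(2 * (Real.sin (θ/2) : ℂ)) * Complex.I := by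
    rw [Complex.exp_mul_I, Complex.exp_mul_I, ← Complex.ofReal_cos, ← Complex.ofReal_sin,
      ← Complex.ofReal_cos, ← Complex.ofReal_sin, Real.cos_neg, Real.sin_neg]
    push_cast; ring
  have h1 : (1 : ℂ) - Complex.exp ((θ : ℂ) * Complex.I)
      = Complex.exp (((θ/2 : ℝ) : ℂ) * Complex.I)
        * (Complex.exp (((-(θ/2) : ℝ) : ℂ) * Complex.I)
            - Complex.exp (((θ/2 : ℝ) : ℂ) * Complex.I)) := by
    rw [mul_sub, ← Complex.exp_add, ← Complex.exp_add]
    have e1 : ((θ/2 : ℝ) : ℂ) * Complex.I + ((-(θ/2) : ℝ) : ℂ) * Complex.I = 0 := by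
      push_cast; ring
    have e2 : ((θ/2 : ℝ) : ℂ) * Complex.I + ((θ/2 : ℝ) : ℂ) * Complex.I
        = (θ : ℂ) * Complex.I := by push_cast; ring
    rw [e1, e2, Complex.exp_zero]
  rw [h1, h2, norm_mul, Complex.norm_exp_ofReal_mul_I, one_mul]
  have : ‖(-(2 * (Real.sin (θ/2) : ℂ)) * Complex.I)‖ = 2 * |Real.sin (θ/2)| := by
    have e3 : (-(2 * (Real.sin (θ/2) : ℂ))) = ((-(2 * Real.sin (θ/2)) : ℝ) : ℂ) := by
      push_cast; ring
    rw [e3, norm_mul, Complex.norm_I, mul_one, Complex.norm_real, Real.norm_eq_abs, abs_neg, abs_mul, abs_two]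
  rw [this]
  have := Real.abs_sin_le_abs (x := θ/2)
  calc 2 * |Real.sin (θ/2)| ≤ 2 * |θ/2| := by linarith
    _ = |θ| := by rw [abs_div, abs_two]; ring

lemma abs_one_sub_EE (N : ℕ) (hN : N ≠ 0) (k : ℤ) :
    ‖1 - EE N k‖ ≤ 2 * Real.pi * |(k : ℝ)| / N := by
  rw [EE_eq_exp_real]
  refine (abs_one_sub_exp _).trans_eq ?_
  rw [abs_div, abs_mul, abs_mul]
  have hπ := Real.pi_pos
  rw [abs_of_nonneg (by norm_num : (0:ℝ) ≤ 2), abs_of_nonneg hπ.le,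
    abs_of_nonneg (by positivity : (0:ℝ) ≤ (N:ℝ))]

lemma abs_one_sub_pow (z : ℂ) (hz : ‖z‖ = 1) (n : ℕ) :
    ‖1 - z ^ n‖ ≤ n * ‖1 - z‖ := by
  induction n with
  | zero => simp
  | succ n ih =>
    have : (1 : ℂ) - z ^ (n+1) = (1 - z ^ n) + z ^ n * (1 - z) := by ring
    rw [this]
    calc ‖(1 - z ^ n) + z ^ n * (1 - z)‖
        ≤ ‖1 - z ^ n‖ + ‖z ^ n * (1 - z)‖ := norm_add_le _ _
      _ ≤ n * ‖1 - z‖ + 1 * ‖1 - z‖ := by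
          rw [norm_mul, norm_pow, hz, one_pow]
          exact add_le_add ih le_rfl
      _ = (n + 1 : ℕ) * ‖1 - z‖ := by push_cast; ring

lemma char_formula (N : ℕ) [NeZero N] (χ : AddChar (ZMod N) ℂ) :
    ∃ t : ZMod N, ∀ x : ZMod N, χ x = EE N ((t * x).val : ℤ) := by
  have hN0 : N ≠ 0 := NeZero.ne N
  have hprim := Complex.isPrimitiveRoot_exp N hN0
  have hpow : (χ 1) ^ N = 1 := by
    rw [← AddChar.map_nsmul_eq_pow]
    have h0 : (N • (1 : ZMod N)) = 0 := by
      simp [nsmul_eq_mul, ZMod.natCast_self]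
    rw [h0, AddChar.map_zero_eq_one]
  obtain ⟨j, hj, hje⟩ := hprim.eq_pow_of_pow_eq_one hpow
  refine ⟨(j : ZMod N), fun x => ?_⟩
  have hx : χ x = (χ 1) ^ (x.val) := by
    conv_lhs => rw [show x = x.val • (1 : ZMod N) by
      simp [nsmul_eq_mul, ZMod.natCast_val, ZMod.cast_id]]
    rw [AddChar.map_nsmul_eq_pow]
  have hNc : (N : ℂ) ≠ 0 := by exact_mod_cast hN0
  have step : χ x = EE N ((j * x.val : ℕ) : ℤ) := by
    rw [hx, ← hje, ← pow_mul, ← Complex.exp_nat_mul]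
    unfold EE
    congr 1
    push_cast
    field_simp
  rw [step]
  apply EE_congr
  have h5 : ((((j : ZMod N) * x).val : ℕ) : ZMod N) = (j : ZMod N) * x := by
    rw [ZMod.natCast_val, ZMod.cast_id]
  rw [Int.cast_natCast, Int.cast_natCast, h5]
  push_cast
  rw [ZMod.natCast_val, ZMod.cast_id]

lemma exists_good_s (N : ℕ) [hN : Fact N.Prime] (Λ : Finset (AddChar (ZMod N) ℂ)) (m : ℕ)
    (hmN : m + 1 ≤ N) (hcard : N ^ Λ.card < N * (m + 1) ^ Λ.card) :
    ∃ s : ZMod N, s ≠ 0 ∧ ∀ χ ∈ Λ, ∃ k : ℤ, |k| ≤ m ∧ χ s = EE N k := by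
  by_contra hcon
  push_neg at hcon
  choose T hT using fun χ : AddChar (ZMod N) ℂ => char_formula N χ
  set f : ZMod N × ({χ : AddChar (ZMod N) ℂ // χ ∈ Λ} → Fin (m + 1))
      → ({χ : AddChar (ZMod N) ℂ // χ ∈ Λ} → ZMod N) :=
    fun p χ => T χ.1 * p.1 + (((p.2 χ : ℕ)) : ZMod N) with hf
  have hinj : Function.Injective f := by
    rintro ⟨x, v⟩ ⟨y, w⟩ h
    simp only [hf] at h
    have hxy : x = y := by
      by_contra hne
      have hs : x - y ≠ 0 := sub_ne_zero.mpr hne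
      obtain ⟨χ, hχΛ, hk⟩ := hcon (x - y) hs
      have h1 := congrFun h ⟨χ, hχΛ⟩
      simp only at h1
      set k : ℤ := ((w ⟨χ, hχΛ⟩ : ℕ) : ℤ) - ((v ⟨χ, hχΛ⟩ : ℕ) : ℤ) with hkdef
      have hTk : T χ * (x - y) = (k : ZMod N) := by
        push_cast [hkdef]
        linear_combination h1
      have hkm : |k| ≤ m := by
        have h2 := (w ⟨χ, hχΛ⟩).isLt
        have h3 := (v ⟨χ, hχΛ⟩).isLt
        rw [abs_le]
        omega
      refine hk k hkm ?_
      rw [hT χ (x - y)]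
      apply EE_congr
      rw [← hTk]
      push_cast
      rw [ZMod.natCast_val, ZMod.cast_id]
    subst hxy
    have hvw : v = w := by
      funext χ'
      have h1 := congrFun h χ'
      have h2 : (((v χ' : ℕ)) : ZMod N) = (((w χ' : ℕ)) : ZMod N) := by
        exact add_left_cancel h1
      have h4 := (v χ').isLt
      have h5 := (w χ').isLt
      have h3 : (v χ' : ℕ) = (w χ' : ℕ) := by
        have h6 := congrArg ZMod.val h2
        rwa [ZMod.val_cast_of_lt (by omega), ZMod.val_cast_of_lt (by omega)] at h6
      exact Fin.ext h3
    rw [hvw]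
  have hle := Fintype.card_le_of_injective f hinj
  rw [Fintype.card_prod, Fintype.card_fun, Fintype.card_fun, ZMod.card,
    Fintype.card_fin, Fintype.card_coe] at hle
  exact absurd hcard (not_lt.mpr hle)


/-- A Bohr neighborhood in `ℤ_N`, `N` prime, contains an arithmetic progression of
length at least `r·N^{1/d}/(2π)`. -/
theorem bohr_contains_long_ap (N : ℕ) [hN : Fact N.Prime]
    (Λ : Finset (AddChar (ZMod N) ℂ)) (d : ℕ) (hd : Λ.card = d)
    (r : ℝ) (hr : r ∈ Set.Icc (0 : ℝ) 2) :
    ∃ (a s : ZMod N) (L : ℕ), s ≠ 0 ∧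
      r * (N : ℝ) ^ ((1 : ℝ) / d) / (2 * Real.pi) ≤ L ∧
      ∀ i : ℕ, i < L → a + s * (i : ZMod N) ∈ bohr Λ r := by
  obtain ⟨hr0, hr2⟩ := hr
  have hπ : 0 < Real.pi := Real.pi_pos
  have hN2 : 2 ≤ N := hN.out.two_le
  haveI : Fact (1 < N) := ⟨hN.out.one_lt⟩
  have hNpos : (0 : ℝ) < N := by positivity
  set x : ℝ := r * (N : ℝ) ^ ((1 : ℝ) / d) / (2 * Real.pi) with hxdef
  have hx0 : 0 ≤ x := by
    have : (0:ℝ) ≤ (N : ℝ) ^ ((1 : ℝ) / d) := Real.rpow_nonneg hNpos.le _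
    positivity
  by_cases hx1 : x ≤ 1
  · refine ⟨0, 1, 1, one_ne_zero, by simpa using hx1, ?_⟩
    intro i hi
    have hi0 : i = 0 := by omega
    subst hi0
    simp only [bohr, Finset.mem_filter, Finset.mem_univ, true_and]
    intro χ hχ
    simp only [Nat.cast_zero, mul_zero, add_zero, AddChar.map_zero_eq_one, sub_self, norm_zero]
    exact hr0
  push_neg at hx1
  have hrpos : 0 < r := by
    rcases lt_or_ge 0 r with h | h
    · exact h
    · exfalso
      have : x ≤ 0 := by
        have hp : (0:ℝ) ≤ (N : ℝ) ^ ((1 : ℝ) / d) := Real.rpow_nonneg hNpos.le _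
        rw [hxdef]
        apply div_nonpos_of_nonpos_of_nonneg
        · exact mul_nonpos_of_nonpos_of_nonneg h hp
        · positivity
      linarith
  have hd1 : 1 ≤ d := by
    by_contra h
    have hd0 : d = 0 := by omega
    rw [hxdef, hd0] at hx1
    simp only [Nat.cast_zero, div_zero, Real.rpow_zero, mul_one] at hx1
    have h6 : 2 * Real.pi < r := (one_lt_div (by positivity)).mp hx1
    nlinarith [Real.pi_gt_three]
  have hdR : (0:ℝ) < d := by exact_mod_cast hd1
  have hNpow_pos : (0:ℝ) < (N : ℝ) ^ ((1 : ℝ) / d) := Real.rpow_pos_of_pos hNpos _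
  set F : ℕ := ⌊x⌋₊ with hFdef
  have hF1 : 1 ≤ F := Nat.le_floor (by exact_mod_cast hx1.le)
  have hFx : (F : ℝ) ≤ x := Nat.floor_le hx0
  have hFpos : (0:ℝ) < F := by exact_mod_cast hF1
  set m₀ : ℕ := ⌊r * N / (2 * Real.pi * F)⌋₊ with hm0def
  set m : ℕ := min m₀ (N - 1) with hmdef
  have hmN : m + 1 ≤ N := by
    have : m ≤ N - 1 := min_le_right _ _
    omega
  have hmbound : (m : ℝ) ≤ r * N / (2 * Real.pi * F) := by
    have h1 : (m : ℝ) ≤ (m₀ : ℝ) := by exact_mod_cast min_le_left m₀ (N-1)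
    refine h1.trans (Nat.floor_le (by positivity))
  -- key lower bound on m+1
  have hm1 : (N : ℝ) ^ ((1:ℝ) - 1/d) < (m : ℝ) + 1 := by
    have hkey : (N : ℝ) ^ ((1:ℝ) - 1/d) = (N : ℝ) / (N : ℝ) ^ ((1:ℝ)/d) := by
      rw [Real.rpow_sub hNpos, Real.rpow_one]
    rcases le_total m₀ (N - 1) with hc | hc
    · have hm_eq : m = m₀ := by rw [hmdef, min_eq_left hc]
      have h2 : r * N / (2 * Real.pi * F) < (m₀ : ℝ) + 1 := Nat.lt_floor_add_one _
      have h3 : (N : ℝ) ^ ((1:ℝ) - 1/d) ≤ r * N / (2 * Real.pi * F) := by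
        rw [hkey]
        rw [div_le_div_iff₀ hNpow_pos (by positivity)]
        -- N * (2π F) ≤ r N * N^{1/d}  ⟸ 2π F ≤ r N^{1/d} = 2π x ⟸ F ≤ x
        have h4 : 2 * Real.pi * (F:ℝ) ≤ 2 * Real.pi * x := by nlinarith
        have h5 : 2 * Real.pi * x = r * (N:ℝ) ^ ((1:ℝ)/d) := by
          rw [hxdef]; field_simp
        nlinarith
      rw [hm_eq]; linarith
    · have hm_eq : m = N - 1 := by rw [hmdef, min_eq_right hc]
      have h2 : (m : ℝ) + 1 = (N : ℝ) := by
        rw [hm_eq]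
        have : (N - 1 : ℕ) + 1 = N := by omega
        exact_mod_cast congrArg (Nat.cast (R := ℝ)) this
      rw [h2]
      calc (N : ℝ) ^ ((1:ℝ) - 1/d) < (N : ℝ) ^ (1:ℝ) := by
            apply Real.rpow_lt_rpow_left_iff (by exact_mod_cast hN.out.one_lt) |>.mpr
            have : (0:ℝ) < 1/d := by positivity
            linarith
        _ = (N : ℝ) := Real.rpow_one _
  have hcard : N ^ Λ.card < N * (m + 1) ^ Λ.card := by
    rw [hd]
    have hexp : ((N : ℝ) ^ ((1:ℝ) - 1/d)) ^ d = (N : ℝ) ^ (d - 1 : ℕ) := by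
      rw [← Real.rpow_natCast ((N : ℝ) ^ ((1:ℝ) - 1/d)) d, ← Real.rpow_mul hNpos.le,
        ← Real.rpow_natCast (N:ℝ) (d-1)]
      congr 1
      rw [Nat.cast_sub hd1]
      push_cast
      field_simp
    have hlt : (N : ℝ) ^ (d - 1 : ℕ) < ((m : ℝ) + 1) ^ d := by
      rw [← hexp]
      exact pow_lt_pow_left₀ hm1 (Real.rpow_nonneg hNpos.le _) (by omega)
    have hlt2 : (N : ℝ) ^ d < (N : ℝ) * ((m : ℝ) + 1) ^ d := by
      have hNd : (N : ℝ) ^ d = (N : ℝ) * (N : ℝ) ^ (d - 1 : ℕ) := by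
        rw [← pow_succ']
        congr 1
        omega
      rw [hNd]
      exact (mul_lt_mul_iff_right₀ hNpos).mpr hlt
    exact_mod_cast hlt2
  obtain ⟨s, hs0, hsχ⟩ := exists_good_s N Λ m hmN hcard
  refine ⟨0, s, F + 1, hs0, ?_, ?_⟩
  · have := (Nat.lt_floor_add_one x).le
    push_cast
    exact this
  intro i hi
  simp only [bohr, Finset.mem_filter, Finset.mem_univ, true_and]
  intro χ hχ
  obtain ⟨k, hk, hχs⟩ := hsχ χ hχ
  have hmul : s * (i : ZMod N) = i • s := by
    rw [nsmul_eq_mul, mul_comm]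
  rw [zero_add, hmul, AddChar.map_nsmul_eq_pow, hχs]
  have h1 : ‖1 - EE N k ^ i‖ ≤ i * ‖1 - EE N k‖ :=
    abs_one_sub_pow _ (abs_EE N k) i
  have h2 : ‖1 - EE N k‖ ≤ 2 * Real.pi * |(k : ℝ)| / N :=
    abs_one_sub_EE N (by omega) k
  have hkm : |(k : ℝ)| ≤ (m : ℝ) := by exact_mod_cast hk
  have hiF : (i : ℝ) ≤ (F : ℝ) := by exact_mod_cast Nat.lt_succ_iff.mp hi
  have h3 : (i : ℝ) * ‖1 - EE N k‖ ≤ (F : ℝ) * (2 * Real.pi * (m : ℝ) / N) := by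
    have hb : ‖1 - EE N k‖ ≤ 2 * Real.pi * (m : ℝ) / N := by
      refine h2.trans ?_
      gcongr
    have hnn : (0:ℝ) ≤ ‖1 - EE N k‖ := norm_nonneg _
    have hnn2 : (0:ℝ) ≤ 2 * Real.pi * (m : ℝ) / N := by positivity
    nlinarith
  have h4 : (F : ℝ) * (2 * Real.pi * (m : ℝ) / N) ≤ r := by
    calc (F : ℝ) * (2 * Real.pi * (m : ℝ) / N) = (2 * Real.pi * F / N) * m := by ring
      _ ≤ (2 * Real.pi * F / N) * (r * N / (2 * Real.pi * F)) := by
          apply mul_le_mul_of_nonneg_left hmbound (by positivity)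
      _ = r := by field_simp
  calc ‖1 - EE N k ^ i‖ ≤ i * ‖1 - EE N k‖ := h1
    _ ≤ (F : ℝ) * (2 * Real.pi * (m : ℝ) / N) := h3
    _ ≤ r := h4
end

section
/- Let ‖·‖ be a norm on the space of complex-valued functions on a finite group G (possibly non-abelian) of size N, and let T : G × G → G with associated parameter κ = max(κ₁, κ₂), where κ₁ = max_{x,a ∈ G} |{b ∈ G : T(a,b) = x}| and κ₂ = max_{x,a ∈ G} |{b ∈ G : T(b,a) = x}|. Suppose δ₁, δ₂ > 0 and A ⊆ G satisfies |A| = θN ≥ δ₂N > 0. Then there exists a function f : G → [0,1] with ‖f − 1_A‖ ≤ δ₁ such that for every pair of sets B, C ⊆ G with ‖1_B − 1_A‖ ≤ δ₁ and ‖1_C − 1_A‖ ≤ δ₁, we have 1_B *_T 1_C(x) ≤ δ₂⁻² f *_T f(x) + 2κδ₂N for every x ∈ G. -/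
open Finset
open scoped Classical

/-- The `T`-convolution `f *_T g(x) = Σ_{T(a,b)=x} f(a)g(b)` on a finite group. -/
noncomputable def convT {G : Type*} [Group G] [Fintype G] (T : G × G → G)
    (f g : G → ℝ) (x : G) : ℝ :=
  ∑ p : G × G, if T p = x then f p.1 * g p.2 else 0

/-- `κ₁(T) = max_{x,a} |{b : T(a,b) = x}|`. -/
noncomputable def kappa1 {G : Type*} [Group G] [Fintype G] (T : G × G → G) : ℕ :=
  Finset.univ.sup fun p : G × G => (Finset.univ.filter fun b => T (p.2, b) = p.1).card

/-- `κ₂(T) = max_{x,a} |{b : T(b,a) = x}|`. -/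
noncomputable def kappa2 {G : Type*} [Group G] [Fintype G] (T : G × G → G) : ℕ :=
  Finset.univ.sup fun p : G × G => (Finset.univ.filter fun b => T (b, p.2) = p.1).card

/-- `κ(T) = max(κ₁, κ₂)`. -/
noncomputable def kappa {G : Type*} [Group G] [Fintype G] (T : G × G → G) : ℕ :=
  max (kappa1 T) (kappa2 T)

/-- Coercion of a real-valued function to a complex-valued one. -/
noncomputable def toC {G : Type*} (f : G → ℝ) : G → ℂ := fun x => (f x : ℂ)

private lemma nrm_sum_le {G : Type*} {ι : Type*} (nrm : (G → ℂ) → ℝ)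
    (h_tri : ∀ u v : G → ℂ, nrm (u + v) ≤ nrm u + nrm v)
    (h_zero : nrm 0 = 0) (s : Finset ι) (g : ι → (G → ℂ)) :
    nrm (∑ i ∈ s, g i) ≤ ∑ i ∈ s, nrm (g i) := by
  classical
  induction s using Finset.induction_on with
  | empty => simp [h_zero]
  | @insert a s ha ih =>
    rw [Finset.sum_insert ha, Finset.sum_insert ha]
    calc nrm (g a + ∑ i ∈ s, g i) ≤ nrm (g a) + nrm (∑ i ∈ s, g i) := h_tri _ _
      _ ≤ _ := by linarith

set_option maxHeartbeats 2000000 in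
/-- The key lemma: given a norm `‖·‖` on complex functions on a finite group `G`, a map
`T : G × G → G`, and `A ⊆ G` with `|A| = θN ≥ δ₂N > 0`, there is `f : G → [0,1]` with
`‖f − 1_A‖ ≤ δ₁` such that every pair `B, C` with `‖1_B − 1_A‖, ‖1_C − 1_A‖ ≤ δ₁` satisfies
`1_B *_T 1_C(x) ≤ δ₂⁻² f *_T f(x) + 2κδ₂N` for all `x`. -/
theorem key_lemma {G : Type*} [Group G] [Fintype G] (N : ℕ) (hN : Fintype.card G = N)
    (nrm : (G → ℂ) → ℝ)
    (h_tri : ∀ u v : G → ℂ, nrm (u + v) ≤ nrm u + nrm v)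
    (h_smul : ∀ (c : ℂ) (u : G → ℂ), nrm (c • u) = ‖c‖ * nrm u)
    (h_def : ∀ u : G → ℂ, nrm u = 0 ↔ u = 0)
    (T : G × G → G) (θ δ₁ δ₂ : ℝ) (hδ₁ : 0 < δ₁) (hδ₂ : 0 < δ₂)
    (A : Finset G) (hA : (A.card : ℝ) = θ * N)
    (hθδ : θ * N ≥ δ₂ * N) (hpos : δ₂ * N > 0) :
    ∃ f : G → ℝ, (∀ x, f x ∈ Set.Icc (0 : ℝ) 1) ∧
      nrm (toC f - toC (indR A)) ≤ δ₁ ∧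
      ∀ B C : Finset G,
        nrm (toC (indR B) - toC (indR A)) ≤ δ₁ →
        nrm (toC (indR C) - toC (indR A)) ≤ δ₁ →
        ∀ x : G, convT T (indR B) (indR C) x ≤
          (δ₂ ^ 2)⁻¹ * convT T f f x + 2 * (kappa T : ℝ) * δ₂ * N := by
  classical
  have hzero : nrm 0 = 0 := (h_def 0).2 rfl
  have hNR : (0:ℝ) < N := by nlinarith [hpos, hδ₂]
  have hAub : (A.card : ℝ) ≤ N := by
    have h := Finset.card_le_univ A
    rw [hN] at h
    exact_mod_cast h
  have hAlb : δ₂ * N ≤ (A.card : ℝ) := by rw [hA]; exact hθδ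
  -- good families of qualifying sets
  have hPempty : (∀ B ∈ (∅ : Finset (Finset G)), nrm (toC (indR B) - toC (indR A)) ≤ δ₁) ∧
      (((∅ : Finset (Finset G)).card : ℝ) * (δ₂ * N)
        ≤ ((((∅ : Finset (Finset G)).biUnion id) \ A).card : ℝ)) := by
    refine ⟨fun B hB => absurd hB (Finset.notMem_empty B), by simp⟩
  obtain ⟨𝓕, h𝓕mem, hmax⟩ := Finset.exists_max_image
    ((univ : Finset (Finset (Finset G))).filter fun F =>
      (∀ B ∈ F, nrm (toC (indR B) - toC (indR A)) ≤ δ₁) ∧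
      ((F.card : ℝ) * (δ₂ * N) ≤ (((F.biUnion id) \ A).card : ℝ)))
    (fun s => s.card) ⟨∅, Finset.mem_filter.2 ⟨Finset.mem_univ _, hPempty⟩⟩
  have hP𝓕 := (Finset.mem_filter.1 h𝓕mem).2
  have hQ𝓕 : ∀ B ∈ 𝓕, nrm (toC (indR B) - toC (indR A)) ≤ δ₁ := hP𝓕.1
  have hcnt𝓕 : ((𝓕.card : ℝ) * (δ₂ * N) ≤ (((𝓕.biUnion id) \ A).card : ℝ)) := hP𝓕.2
  have hmax' : ∀ F : Finset (Finset G),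
      ((∀ B ∈ F, nrm (toC (indR B) - toC (indR A)) ≤ δ₁) ∧
        ((F.card : ℝ) * (δ₂ * N) ≤ (((F.biUnion id) \ A).card : ℝ))) → F.card ≤ 𝓕.card :=
    fun F hF => hmax F (Finset.mem_filter.2 ⟨Finset.mem_univ _, hF⟩)
  -- bound on the size of the family
  have hUcard : (((𝓕.biUnion id \ A)).card : ℝ) ≤ (N : ℝ) - A.card := by
    have h1 : 𝓕.biUnion id \ A ⊆ univ \ A :=
      Finset.sdiff_subset_sdiff (Finset.subset_univ _) le_rfl
    have h2 := Finset.card_le_card h1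
    rw [Finset.card_univ_diff, hN] at h2
    have h3 : A.card ≤ N := by exact_mod_cast hAub
    have h4 : (((𝓕.biUnion id \ A)).card : ℝ) ≤ ((N - A.card : ℕ) : ℝ) := by exact_mod_cast h2
    rwa [Nat.cast_sub h3] at h4
  have hm : (𝓕.card : ℝ) * δ₂ + δ₂ ≤ 1 := by
    have h2 : (𝓕.card : ℝ) * (δ₂ * N) + δ₂ * N ≤ N := by
      calc (𝓕.card : ℝ) * (δ₂ * N) + δ₂ * N
          ≤ (((𝓕.biUnion id \ A)).card : ℝ) + A.card := by linarith [hcnt𝓕, hAlb]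
        _ ≤ N := by linarith [hUcard]
    nlinarith [hNR]
  -- coverage counts
  have hcov0 : ∀ x : G, (0:ℝ) ≤ ((𝓕.filter fun Bb => x ∈ Bb).card : ℝ) :=
    fun x => Nat.cast_nonneg _
  have hcovm : ∀ x : G, ((𝓕.filter fun Bb => x ∈ Bb).card : ℝ) ≤ (𝓕.card : ℝ) := by
    intro x
    exact_mod_cast Finset.card_filter_le 𝓕 (fun Bb => x ∈ Bb)
  have hcovU : ∀ x : G, x ∈ 𝓕.biUnion id → (1:ℝ) ≤ ((𝓕.filter fun Bb => x ∈ Bb).card : ℝ) := by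
    intro x hx
    obtain ⟨Bb, hBb, hxBb⟩ := Finset.mem_biUnion.1 hx
    have h : 0 < (𝓕.filter fun Bb => x ∈ Bb).card :=
      Finset.card_pos.2 ⟨Bb, Finset.mem_filter.2 ⟨hBb, hxBb⟩⟩
    exact_mod_cast h
  have hsum : ∀ x : G, ∑ Bb ∈ 𝓕, (indR Bb x - indR A x)
      = ((𝓕.filter fun Bb => x ∈ Bb).card : ℝ) - (𝓕.card : ℝ) * indR A x := by
    intro x
    rw [Finset.sum_sub_distrib, Finset.sum_const, nsmul_eq_mul]
    have h1 : ∑ Bb ∈ 𝓕, indR Bb x = ((𝓕.filter fun Bb => x ∈ Bb).card : ℝ) := by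
      simp only [indR]
      rw [Finset.sum_boole]
    rw [h1]
  set f : G → ℝ := fun x => indR A x + δ₂ * ∑ Bb ∈ 𝓕, (indR Bb x - indR A x) with hfdef
  have hfA : ∀ x ∈ A, δ₂ ≤ f x ∧ f x ≤ 1 := by
    intro x hx
    have h1 : f x = 1 + δ₂ * (((𝓕.filter fun Bb => x ∈ Bb).card : ℝ) - (𝓕.card : ℝ)) := by
      rw [hfdef]
      simp only
      rw [hsum x]
      simp only [indR, hx, if_true]
      ring
    rw [h1]
    constructor <;> nlinarith [hcov0 x, hcovm x, hm]
  have hfnA : ∀ x, x ∉ A → f x = δ₂ * ((𝓕.filter fun Bb => x ∈ Bb).card : ℝ) := by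
    intro x hx
    rw [hfdef]
    simp only
    rw [hsum x]
    simp only [indR, hx, if_false]
    ring
  have hf01 : ∀ x, 0 ≤ f x ∧ f x ≤ 1 := by
    intro x
    by_cases hx : x ∈ A
    · exact ⟨le_trans (le_of_lt hδ₂) (hfA x hx).1, (hfA x hx).2⟩
    · rw [hfnA x hx]
      constructor
      · exact mul_nonneg (le_of_lt hδ₂) (hcov0 x)
      · nlinarith [hcovm x, hm, hcov0 x]
  have hfsmall : ∀ x, f x < δ₂ → x ∉ A ∧ x ∉ 𝓕.biUnion id := by
    intro x hx
    have hxA : x ∉ A := by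
      intro hxA
      exact absurd hx (not_lt.2 (hfA x hxA).1)
    refine ⟨hxA, fun hxU => ?_⟩
    rw [hfnA x hxA] at hx
    nlinarith [hcovU x hxU]
  -- no qualifying set can have many points where f is small
  have hnoviol : ∀ B : Finset G, nrm (toC (indR B) - toC (indR A)) ≤ δ₁ →
      (((univ : Finset G).filter fun a => a ∈ B ∧ f a < δ₂).card : ℝ) ≤ δ₂ * N := by
    intro B₀ hQ₀
    by_contra hlt
    push_neg at hlt
    have hbadmem : ∀ x ∈ (univ : Finset G).filter fun a => a ∈ B₀ ∧ f a < δ₂,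
        x ∈ B₀ ∧ x ∉ A ∧ x ∉ 𝓕.biUnion id := by
      intro x hx
      obtain ⟨-, hxB, hxf⟩ := Finset.mem_filter.1 hx
      exact ⟨hxB, (hfsmall x hxf).1, (hfsmall x hxf).2⟩
    have hbadne : ((univ : Finset G).filter fun a => a ∈ B₀ ∧ f a < δ₂).Nonempty := by
      rw [← Finset.card_pos]
      rcases Nat.eq_zero_or_pos ((univ : Finset G).filter fun a => a ∈ B₀ ∧ f a < δ₂).card
        with h | h
      · exfalso; rw [h] at hlt; push_cast at hlt; nlinarith [hpos]
      · exact h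
    have hB₀ : B₀ ∉ 𝓕 := by
      intro hB₀
      obtain ⟨x, hx⟩ := hbadne
      exact (hbadmem x hx).2.2 (Finset.mem_biUnion.2 ⟨B₀, hB₀, (hbadmem x hx).1⟩)
    have hsub : (𝓕.biUnion id \ A) ∪ ((univ : Finset G).filter fun a => a ∈ B₀ ∧ f a < δ₂)
        ⊆ ((insert B₀ 𝓕).biUnion id) \ A := by
      intro x hx
      rw [Finset.biUnion_insert]
      rcases Finset.mem_union.1 hx with h | h
      · obtain ⟨hxU, hxA⟩ := Finset.mem_sdiff.1 h
        exact Finset.mem_sdiff.2 ⟨Finset.mem_union.2 (Or.inr hxU), hxA⟩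
      · exact Finset.mem_sdiff.2 ⟨Finset.mem_union.2 (Or.inl (hbadmem x h).1),
          (hbadmem x h).2.1⟩
    have hdisj : Disjoint (𝓕.biUnion id \ A)
        ((univ : Finset G).filter fun a => a ∈ B₀ ∧ f a < δ₂) := by
      rw [Finset.disjoint_right]
      intro x hx hxU
      exact (hbadmem x hx).2.2 (Finset.mem_sdiff.1 hxU).1
    have hcard' : ((𝓕.biUnion id \ A).card : ℝ)
        + (((univ : Finset G).filter fun a => a ∈ B₀ ∧ f a < δ₂).card : ℝ)
        ≤ ((((insert B₀ 𝓕).biUnion id) \ A).card : ℝ) := by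
      have h1 := Finset.card_le_card hsub
      rw [Finset.card_union_of_disjoint hdisj] at h1
      exact_mod_cast h1
    have hPF' : (∀ B ∈ insert B₀ 𝓕, nrm (toC (indR B) - toC (indR A)) ≤ δ₁) ∧
        (((insert B₀ 𝓕).card : ℝ) * (δ₂ * N)
          ≤ ((((insert B₀ 𝓕).biUnion id) \ A).card : ℝ)) := by
      constructor
      · intro B hB
        rcases Finset.mem_insert.1 hB with h | h
        · rwa [h]
        · exact hQ𝓕 B h
      · rw [Finset.card_insert_of_notMem hB₀]
        push_cast
        nlinarith [hlt, hcard', hcnt𝓕]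
    have hcontra := hmax' _ hPF'
    rw [Finset.card_insert_of_notMem hB₀] at hcontra
    omega
  -- norm bound
  have hnorm : nrm (toC f - toC (indR A)) ≤ δ₁ := by
    have heq : toC f - toC (indR A)
        = ((δ₂ : ℝ) : ℂ) • ∑ Bb ∈ 𝓕, (toC (indR Bb) - toC (indR A)) := by
      funext x
      simp only [toC, hfdef, Pi.sub_apply, Pi.smul_apply, Finset.sum_apply, smul_eq_mul]
      push_cast
      ring
    rw [heq, h_smul]
    have habs : ‖((δ₂ : ℝ) : ℂ)‖ = δ₂ := by
      simp [abs_of_pos hδ₂]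
    rw [habs]
    have hsumle : nrm (∑ Bb ∈ 𝓕, (toC (indR Bb) - toC (indR A))) ≤ (𝓕.card : ℝ) * δ₁ := by
      calc nrm (∑ Bb ∈ 𝓕, (toC (indR Bb) - toC (indR A)))
          ≤ ∑ Bb ∈ 𝓕, nrm (toC (indR Bb) - toC (indR A)) :=
            nrm_sum_le nrm h_tri hzero _ _
        _ ≤ ∑ _Bb ∈ 𝓕, δ₁ := Finset.sum_le_sum (fun Bb hBb => hQ𝓕 Bb hBb)
        _ = (𝓕.card : ℝ) * δ₁ := by rw [Finset.sum_const, nsmul_eq_mul]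
    have hnn : 0 ≤ nrm (∑ Bb ∈ 𝓕, (toC (indR Bb) - toC (indR A))) := by
      set u : G → ℂ := ∑ Bb ∈ 𝓕, (toC (indR Bb) - toC (indR A)) with hu
      have hsm : nrm ((-1 : ℂ) • u) = nrm u := by
        rw [h_smul]; simp
      have h1 : nrm (u + (-1 : ℂ) • u) ≤ nrm u + nrm ((-1 : ℂ) • u) := h_tri _ _
      have h2 : u + (-1 : ℂ) • u = 0 := by funext x; simp
      rw [h2, hzero, hsm] at h1
      linarith
    calc δ₂ * nrm (∑ Bb ∈ 𝓕, (toC (indR Bb) - toC (indR A))) ≤ δ₂ * ((𝓕.card : ℝ) * δ₁) :=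
          mul_le_mul_of_nonneg_left hsumle (le_of_lt hδ₂)
      _ ≤ δ₁ := by nlinarith [hm]
  refine ⟨f, fun x => ⟨(hf01 x).1, (hf01 x).2⟩, hnorm, ?_⟩
  -- the convolution bound
  intro B C hB hC x₀
  have hκ1 : ∀ a : G, (((univ : Finset G).filter fun b => T (a, b) = x₀).card : ℝ)
      ≤ (kappa T : ℝ) := by
    intro a
    have h1 : ((univ : Finset G).filter fun b => T (a, b) = x₀).card ≤ kappa1 T :=
      Finset.le_sup (f := fun p : G × G => ((univ : Finset G).filter
        fun b => T (p.2, b) = p.1).card) (Finset.mem_univ (x₀, a))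
    have h2 : kappa1 T ≤ kappa T := le_max_left _ _
    exact_mod_cast le_trans h1 h2
  have hκ2 : ∀ b : G, (((univ : Finset G).filter fun a => T (a, b) = x₀).card : ℝ)
      ≤ (kappa T : ℝ) := by
    intro b
    have h1 : ((univ : Finset G).filter fun a => T (a, b) = x₀).card ≤ kappa2 T :=
      Finset.le_sup (f := fun p : G × G => ((univ : Finset G).filter
        fun a => T (a, p.2) = p.1).card) (Finset.mem_univ (x₀, b))
    have h2 : kappa2 T ≤ kappa T := le_max_right _ _
    exact_mod_cast le_trans h1 h2
  have hκ0 : (0:ℝ) ≤ (kappa T : ℝ) := Nat.cast_nonneg _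
  have hcard1 : (((univ : Finset G).filter fun a => a ∈ B ∧ f a < δ₂).card : ℝ) ≤ δ₂ * N :=
    hnoviol B hB
  have hcard2 : (((univ : Finset G).filter fun b => b ∈ C ∧ f b < δ₂).card : ℝ) ≤ δ₂ * N :=
    hnoviol C hC
  -- pointwise bound
  have key : ∀ a b : G, (if T (a, b) = x₀ then indR B a * indR C b else 0)
      ≤ (δ₂ ^ 2)⁻¹ * (if T (a, b) = x₀ then f a * f b else 0)
        + ((if T (a, b) = x₀ ∧ (a ∈ B ∧ f a < δ₂) then (1:ℝ) else 0)
          + (if T (a, b) = x₀ ∧ (b ∈ C ∧ f b < δ₂) then (1:ℝ) else 0)) := by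
    intro a b
    have hfa0 := (hf01 a).1
    have hfb0 := (hf01 b).1
    have hinv : (0:ℝ) ≤ (δ₂ ^ 2)⁻¹ := by positivity
    by_cases hT : T (a, b) = x₀
    · simp only [hT, true_and, if_true]
      have hIB : (0:ℝ) ≤ indR B a ∧ indR B a ≤ 1 := by
        simp only [indR]; split <;> norm_num
      have hIC : (0:ℝ) ≤ indR C b ∧ indR C b ≤ 1 := by
        simp only [indR]; split <;> norm_num
      have hprod0 : (0:ℝ) ≤ indR B a * indR C b := mul_nonneg hIB.1 hIC.1
      have hprod1 : indR B a * indR C b ≤ 1 := by nlinarith [hIB.1, hIB.2, hIC.1, hIC.2]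
      have hff0 : (0:ℝ) ≤ (δ₂ ^ 2)⁻¹ * (f a * f b) :=
        mul_nonneg hinv (mul_nonneg hfa0 hfb0)
      have h2 : (0:ℝ) ≤ if a ∈ B ∧ f a < δ₂ then (1:ℝ) else 0 := by split <;> norm_num
      have h2' : (0:ℝ) ≤ if b ∈ C ∧ f b < δ₂ then (1:ℝ) else 0 := by split <;> norm_num
      by_cases hBa : a ∈ B
      · by_cases hfa : f a < δ₂
        · have h1 : (if a ∈ B ∧ f a < δ₂ then (1:ℝ) else 0) = 1 := if_pos ⟨hBa, hfa⟩
          rw [h1]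
          linarith
        · by_cases hCb : b ∈ C
          · by_cases hfb : f b < δ₂
            · have h1 : (if b ∈ C ∧ f b < δ₂ then (1:ℝ) else 0) = 1 := if_pos ⟨hCb, hfb⟩
              rw [h1]
              linarith
            · have ha : δ₂ ≤ f a := not_lt.1 hfa
              have hb' : δ₂ ≤ f b := not_lt.1 hfb
              have h3 : δ₂ ^ 2 ≤ f a * f b := by nlinarith
              have h4 : (1:ℝ) ≤ (δ₂ ^ 2)⁻¹ * (f a * f b) := by
                have h5 : (δ₂ ^ 2)⁻¹ * (δ₂ ^ 2) ≤ (δ₂ ^ 2)⁻¹ * (f a * f b) :=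
                  mul_le_mul_of_nonneg_left h3 hinv
                rwa [inv_mul_cancel₀ (by positivity : (δ₂:ℝ) ^ 2 ≠ 0)] at h5
              linarith
          · have h0 : indR C b = 0 := if_neg hCb
            rw [h0, mul_zero]
            linarith
      · have h0 : indR B a = 0 := if_neg hBa
        rw [h0, zero_mul]
        linarith
    · simp [hT]
  -- error sums
  have hE1 : ∑ a : G, ∑ b : G, (if T (a, b) = x₀ ∧ (a ∈ B ∧ f a < δ₂) then (1:ℝ) else 0)
      ≤ (kappa T : ℝ) * (δ₂ * N) := by
    have hrow : ∀ a : G, ∑ b : G, (if T (a, b) = x₀ ∧ (a ∈ B ∧ f a < δ₂) then (1:ℝ) else 0)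
        ≤ (if a ∈ B ∧ f a < δ₂ then (kappa T : ℝ) else 0) := by
      intro a
      by_cases h : a ∈ B ∧ f a < δ₂
      · simp only [h, and_true, if_true]
        rw [Finset.sum_boole]
        exact hκ1 a
      · simp [h]
    calc ∑ a : G, ∑ b : G, (if T (a, b) = x₀ ∧ (a ∈ B ∧ f a < δ₂) then (1:ℝ) else 0)
        ≤ ∑ a : G, (if a ∈ B ∧ f a < δ₂ then (kappa T : ℝ) else 0) :=
          Finset.sum_le_sum fun a _ => hrow a
      _ = ∑ a : G, (kappa T : ℝ) * (if a ∈ B ∧ f a < δ₂ then (1:ℝ) else 0) := by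
          refine Finset.sum_congr rfl fun a _ => ?_
          split <;> ring
      _ = (kappa T : ℝ) * (((univ : Finset G).filter fun a => a ∈ B ∧ f a < δ₂).card : ℝ) := by
          rw [← Finset.mul_sum, Finset.sum_boole]
      _ ≤ (kappa T : ℝ) * (δ₂ * N) := mul_le_mul_of_nonneg_left hcard1 hκ0
  have hE2 : ∑ a : G, ∑ b : G, (if T (a, b) = x₀ ∧ (b ∈ C ∧ f b < δ₂) then (1:ℝ) else 0)
      ≤ (kappa T : ℝ) * (δ₂ * N) := by
    rw [Finset.sum_comm]
    have hcol : ∀ b : G, ∑ a : G, (if T (a, b) = x₀ ∧ (b ∈ C ∧ f b < δ₂) then (1:ℝ) else 0)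
        ≤ (if b ∈ C ∧ f b < δ₂ then (kappa T : ℝ) else 0) := by
      intro b
      by_cases h : b ∈ C ∧ f b < δ₂
      · simp only [h, and_true, if_true]
        rw [Finset.sum_boole]
        exact hκ2 b
      · simp [h]
    calc ∑ b : G, ∑ a : G, (if T (a, b) = x₀ ∧ (b ∈ C ∧ f b < δ₂) then (1:ℝ) else 0)
        ≤ ∑ b : G, (if b ∈ C ∧ f b < δ₂ then (kappa T : ℝ) else 0) :=
          Finset.sum_le_sum fun b _ => hcol b
      _ = ∑ b : G, (kappa T : ℝ) * (if b ∈ C ∧ f b < δ₂ then (1:ℝ) else 0) := by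
          refine Finset.sum_congr rfl fun b _ => ?_
          split <;> ring
      _ = (kappa T : ℝ) * (((univ : Finset G).filter fun b => b ∈ C ∧ f b < δ₂).card : ℝ) := by
          rw [← Finset.mul_sum, Finset.sum_boole]
      _ ≤ (kappa T : ℝ) * (δ₂ * N) := mul_le_mul_of_nonneg_left hcard2 hκ0
  -- assemble
  have hconv1 : convT T (indR B) (indR C) x₀
      = ∑ a : G, ∑ b : G, (if T (a, b) = x₀ then indR B a * indR C b else 0) := by
    simp only [convT]
    rw [Fintype.sum_prod_type]
  have hconv2 : convT T f f x₀
      = ∑ a : G, ∑ b : G, (if T (a, b) = x₀ then f a * f b else 0) := by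
    simp only [convT]
    rw [Fintype.sum_prod_type]
  have hmain : convT T (indR B) (indR C) x₀
      ≤ (δ₂ ^ 2)⁻¹ * convT T f f x₀
        + (∑ a : G, ∑ b : G, (if T (a, b) = x₀ ∧ (a ∈ B ∧ f a < δ₂) then (1:ℝ) else 0)
          + ∑ a : G, ∑ b : G, (if T (a, b) = x₀ ∧ (b ∈ C ∧ f b < δ₂) then (1:ℝ) else 0)) := by
    rw [hconv1, hconv2, Finset.mul_sum, ← Finset.sum_add_distrib, ← Finset.sum_add_distrib]
    refine Finset.sum_le_sum fun a _ => ?_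
    rw [Finset.mul_sum, ← Finset.sum_add_distrib, ← Finset.sum_add_distrib]
    exact Finset.sum_le_sum fun b _ => key a b
  calc convT T (indR B) (indR C) x₀
      ≤ (δ₂ ^ 2)⁻¹ * convT T f f x₀
        + (∑ a : G, ∑ b : G, (if T (a, b) = x₀ ∧ (a ∈ B ∧ f a < δ₂) then (1:ℝ) else 0)
          + ∑ a : G, ∑ b : G, (if T (a, b) = x₀ ∧ (b ∈ C ∧ f b < δ₂) then (1:ℝ) else 0)) :=
        hmain
    _ ≤ (δ₂ ^ 2)⁻¹ * convT T f f x₀ + ((kappa T : ℝ) * (δ₂ * N) + (kappa T : ℝ) * (δ₂ * N)) := by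
        linarith [hE1, hE2]
    _ = (δ₂ ^ 2)⁻¹ * convT T f f x₀ + 2 * (kappa T : ℝ) * δ₂ * N := by ring
end

section
/- Let N ≥ 2 be an integer and let x₁, ..., x_k ∈ ℤ_N. Then there exists an integer n with n ≢ 0 (mod N) such that ‖n·x_i‖ ≤ N^{1−1/(k+1)} for every i = 1, ..., k, where ‖x‖ denotes the absolute value of the least residue in absolute value congruent to x modulo N. -/
lemma abs_valMinAbs_intCast_le {N : ℕ} [NeZero N] (z : ℤ) :
    |((z : ZMod N)).valMinAbs| ≤ |z| := by
  set v : ℤ := ((z : ZMod N)).valMinAbs with hv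
  have hvz : ((v : ℤ) : ZMod N) = (z : ZMod N) := by
    rw [hv, ZMod.coe_valMinAbs]
  have hdvd : (N : ℤ) ∣ (z - v) := by
    rwa [← ZMod.intCast_zmod_eq_zero_iff_dvd, Int.cast_sub, sub_eq_zero, eq_comm]
  have h2 : 2 * |v| ≤ (N : ℤ) := by
    have h := ZMod.natAbs_valMinAbs_le ((z : ZMod N))
    rw [← hv] at h
    rw [Int.abs_eq_natAbs]
    omega
  rcases eq_or_ne z v with h | h
  · rw [h]
  · have hNle : (N : ℤ) ≤ |z - v| := by
      obtain ⟨c, hc⟩ := hdvd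
      have hc0 : c ≠ 0 := by rintro rfl; rw [mul_zero] at hc; exact h (by omega)
      rw [hc, abs_mul, abs_of_nonneg (by positivity : (0:ℤ) ≤ (N:ℤ))]
      nlinarith [abs_pos.mpr hc0, abs_nonneg c, (Int.natCast_pos.mpr (Nat.pos_of_ne_zero (NeZero.ne N)))]
    have htri : |z - v| ≤ |z| + |v| := abs_sub z v
    linarith

/-- Dirichlet box principle: given `x₁, ..., x_k ∈ ℤ_N` there is `n ≢ 0 (mod N)` with
`‖n·x_i‖ ≤ N^{1−1/(k+1)}` for all `i`, where `‖·‖` is the distance to `0` measured by the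
least residue in absolute value. -/
theorem dirichlet_box (N : ℕ) (hN : 2 ≤ N) (k : ℕ) (x : Fin k → ZMod N) :
    ∃ n : ℤ, (n : ZMod N) ≠ 0 ∧
      ∀ i : Fin k,
        (|((n : ZMod N) * x i).valMinAbs| : ℝ) ≤
          (N : ℝ) ^ ((1 : ℝ) - 1 / (k + 1)) := by
  haveI : NeZero N := ⟨by omega⟩
  have hN1 : (1 : ℝ) < (N : ℝ) := by exact_mod_cast (by omega : 1 < N)
  have hN0 : (0 : ℝ) ≤ (N : ℝ) := by positivity
  have hk1 : (0 : ℝ) < (k : ℝ) + 1 := by positivity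
  set e : ℝ := (k : ℝ) / ((k : ℝ) + 1) with he
  have hexp : (1 : ℝ) - 1 / ((k : ℝ) + 1) = e := by
    rw [he]
    field_simp
    ring
  set b : ℝ := (N : ℝ) ^ e with hb
  have hb0 : 0 ≤ b := Real.rpow_nonneg hN0 e
  set L : ℕ := ⌊b⌋₊ + 1 with hL
  have hbL : b < (L : ℕ) := by
    push_cast [hL]
    exact Nat.lt_floor_add_one b
  have hbN : b < (N : ℝ) := by
    have he1 : e < 1 := by
      rw [he, div_lt_one hk1]; linarith
    calc b = (N : ℝ) ^ e := hb
      _ < (N : ℝ) ^ (1 : ℝ) := Real.rpow_lt_rpow_of_exponent_lt hN1 he1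
      _ = (N : ℝ) := Real.rpow_one _
  have hLN : L ≤ N := by
    have : ⌊b⌋₊ < N := (Nat.floor_lt hb0).mpr hbN
    omega
  -- the cardinality inequality
  have hcard : N ^ k < N * L ^ k := by
    have h1 : (N : ℝ) ^ k = b ^ (k + 1) := by
      rw [hb, ← Real.rpow_natCast ((N:ℝ) ^ e) (k+1), ← Real.rpow_mul hN0]
      rw [← Real.rpow_natCast (N : ℝ) k]
      congr 1
      rw [he]
      field_simp
      simp
    have h2 : b ^ (k + 1) < (L : ℝ) ^ (k + 1) :=
      pow_lt_pow_left₀ hbL hb0 (by omega)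
    have h3 : (L : ℝ) ^ (k + 1) ≤ (N : ℝ) * (L : ℝ) ^ k := by
      rw [pow_succ']
      have : (L : ℝ) ≤ (N : ℝ) := by exact_mod_cast hLN
      have hLk : (0:ℝ) ≤ (L : ℝ) ^ k := by positivity
      nlinarith
    have : (N : ℝ) ^ k < (N : ℝ) * (L : ℝ) ^ k := by
      rw [h1]; linarith
    exact_mod_cast this
  -- pigeonhole
  classical
  let f : ZMod N × (Fin k → Fin L) → (Fin k → ZMod N) :=
    fun p i => p.1 * x i - ((p.2 i : ℕ) : ZMod N)
  have hcards : Fintype.card (Fin k → ZMod N) <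
      Fintype.card (ZMod N × (Fin k → Fin L)) := by
    simp only [Fintype.card_prod, Fintype.card_fun, Fintype.card_fin, ZMod.card]
    exact hcard
  obtain ⟨p, q, hpq, hfeq⟩ := Fintype.exists_ne_map_eq_of_card_lt f hcards
  have hn : p.1 ≠ q.1 := by
    intro h
    apply hpq
    have h2 : p.2 = q.2 := by
      funext i
      have := congrFun hfeq i
      simp only [f, h] at this
      have hcast : ((p.2 i : ℕ) : ZMod N) = ((q.2 i : ℕ) : ZMod N) := by
        linear_combination -this
      have hval : (p.2 i : ℕ) = (q.2 i : ℕ) := by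
        have h1 := ZMod.val_cast_of_lt (lt_of_lt_of_le (p.2 i).isLt hLN)
        have h2 := ZMod.val_cast_of_lt (lt_of_lt_of_le (q.2 i).isLt hLN)
        rw [← h1, ← h2, hcast]
      exact Fin.ext hval
    exact Prod.ext h h2
  refine ⟨(p.1.val : ℤ) - (q.1.val : ℤ), ?_, ?_⟩
  · have : (((p.1.val : ℤ) - (q.1.val : ℤ) : ℤ) : ZMod N) = p.1 - q.1 := by
      push_cast
      rw [ZMod.natCast_val, ZMod.natCast_val, ZMod.cast_id, ZMod.cast_id]
    rw [this]
    exact sub_ne_zero.mpr hn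
  · intro i
    set z : ℤ := ((p.2 i : ℕ) : ℤ) - ((q.2 i : ℕ) : ℤ) with hz
    have key := congrFun hfeq i
    simp only [f] at key
    have hzc : ((((p.1.val : ℤ) - (q.1.val : ℤ)) : ℤ) : ZMod N) * x i = ((z : ℤ) : ZMod N) := by
      rw [hz]
      push_cast [ZMod.natCast_val, ZMod.cast_id]
      linear_combination key
    rw [hzc]
    have h1 : |((z : ZMod N)).valMinAbs| ≤ |z| := abs_valMinAbs_intCast_le z
    have h2 : |z| ≤ (L : ℤ) - 1 := by
      rw [hz, abs_le]
      have h1 := (p.2 i).isLt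
      have h2 := (q.2 i).isLt
      constructor <;> omega
    have h3 : ((L : ℝ) - 1) ≤ b := by
      push_cast [hL]
      simpa using Nat.floor_le hb0
    rw [hexp]
    calc (|((z : ZMod N)).valMinAbs| : ℝ) ≤ (|z| : ℝ) := by exact_mod_cast h1
      _ ≤ (L : ℝ) - 1 := by exact_mod_cast h2
      _ ≤ b := h3
end

section
/- Let G be a finite additive abelian group with |G| = N, let A ⊆ G with |A| = θN > 0, and let δ₁ > 0. Let Λ be a finite set of characters of G such that |1̂_A(χ)| ≤ δ₁N/2 for every character χ not in Λ. Then for every t in the Bohr neighborhood B(Λ, δ₁/θ), the function 1_{A+t} − 1_A is δ₁-uniform, where A+t = {a+t : a ∈ A}. -/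
open Finset
open scoped Classical Pointwise

lemma ft_indR {G : Type*} [AddCommGroup G] [Fintype G] (A : Finset G) (χ : AddChar G ℂ) :
    ft (indR A) χ = ∑ a ∈ A, χ a := by
  simp only [ft, indR]
  have h : ∀ x : G, ((if x ∈ A then (1:ℝ) else 0 : ℝ) : ℂ) * χ x = if x ∈ A then χ x else 0 :=
    fun x => by split <;> simp
  rw [Finset.sum_congr rfl fun x _ => h x, Finset.sum_ite_mem, Finset.univ_inter]

lemma ft_indR_bound {G : Type*} [AddCommGroup G] [Fintype G] (A : Finset G) (χ : AddChar G ℂ) :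
    ‖ft (indR A) χ‖ ≤ A.card := by
  rw [ft_indR]
  calc ‖∑ a ∈ A, χ a‖ ≤ ∑ a ∈ A, ‖χ a‖ :=
        (norm_sum_le _ _)
    _ = A.card := by
        simp

/-- If all Fourier coefficients of `1_A` outside `Λ` are at most `δ₁N/2`, then for every
`t` in the Bohr neighborhood `B(Λ, δ₁/θ)` the function `1_{A+t} − 1_A` is `δ₁`-uniform. -/
theorem translate_uniform {G : Type*} [AddCommGroup G] [Fintype G] (N : ℕ)
    (hN : Fintype.card G = N)
    (A : Finset G) (θ : ℝ) (hA : (A.card : ℝ) = θ * N) (hApos : θ * N > 0)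
    (δ₁ : ℝ) (hδ₁ : 0 < δ₁)
    (Λ : Finset (AddChar G ℂ))
    (hΛ : ∀ χ : AddChar G ℂ, χ ∉ Λ → ‖ft (indR A) χ‖ ≤ δ₁ * N / 2) :
    ∀ t ∈ bohr Λ (δ₁ / θ),
      IsUniform (indR (A.image fun a => a + t) - indR A) δ₁ := by
  intro t ht χ
  have hθ : 0 < θ := by
    by_contra h
    push_neg at h
    nlinarith [Nat.cast_nonneg (α := ℝ) N]
  have hNpos : (0:ℝ) < N := by nlinarith
  -- compute the Fourier transform of the difference
  have hkey : ft (indR (A.image fun a => a + t) - indR A) χ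
      = (χ t - 1) * ft (indR A) χ := by
    have hsub : ft (indR (A.image fun a => a + t) - indR A) χ
        = ft (indR (A.image fun a => a + t)) χ - ft (indR A) χ := by
      simp only [ft, Pi.sub_apply, Complex.ofReal_sub, sub_mul, Finset.sum_sub_distrib]
    rw [hsub, ft_indR, ft_indR]
    rw [Finset.sum_image (by intro a _ b _ h; exact add_right_cancel h)]
    simp only [AddChar.map_add_eq_mul]
    rw [← Finset.sum_mul, sub_mul, one_mul, mul_comm]
  rw [hkey, norm_mul, hN]
  by_cases hχ : χ ∈ Λ
  · -- Bohr bound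
    have hb : ‖1 - χ t‖ ≤ δ₁ / θ := by
      simp only [bohr, Finset.mem_filter] at ht
      exact ht.2 χ hχ
    have h1 : ‖χ t - 1‖ ≤ δ₁ / θ := by rwa [norm_sub_rev]
    have h2 := ft_indR_bound A χ
    rw [hA] at h2
    calc ‖χ t - 1‖ * ‖ft (indR A) χ‖
        ≤ (δ₁ / θ) * (θ * N) := by
          apply mul_le_mul h1 h2 (norm_nonneg _)
          positivity
      _ = δ₁ * N := by field_simp
  · have h1 : ‖χ t - 1‖ ≤ 2 := by
      calc ‖χ t - 1‖ ≤ ‖χ t‖ + ‖(1:ℂ)‖ :=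
            norm_sub_le _ _
        _ ≤ 2 := by rw [AddChar.norm_apply]; norm_num
    have h2 := hΛ χ hχ
    calc ‖χ t - 1‖ * ‖ft (indR A) χ‖
        ≤ 2 * (δ₁ * N / 2) := by
          apply mul_le_mul h1 h2 (norm_nonneg _); norm_num
      _ = δ₁ * N := by ring
end

section
/- Let G be a finite additive abelian group with |G| = N, let Λ be a finite set of characters of G, let ρ > 0, and let B' = B(Λ, ρ/2). If S ⊆ G is a nonempty set satisfying max over non-principal characters χ of |1̂_S(χ)| < |S|·|B'|/N, then S has non-empty intersection with every translate of the Bohr neighborhood B(Λ, ρ); in particular, for every t ∈ G there exists x ∈ S with x ∈ t + B(Λ, ρ). -/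
open Finset
open scoped Classical Pointwise

private theorem triple_expand {G : Type*} [Fintype G] (a b c : G → ℂ) (w : ℂ) :
    (∑ x, a x) * (∑ y, b y) * (∑ z, c z) * w = ∑ x, ∑ y, ∑ z, a x * b y * c z * w := by
  simp only [Finset.sum_mul, Finset.mul_sum]
  rw [Finset.sum_comm]
  have h1 : ∀ q : G, (∑ x : G, ∑ p : G, a p * b q * c x * w)
      = ∑ p : G, ∑ x : G, a p * b q * c x * w := fun _ => Finset.sum_comm
  simp only [h1]
  rw [Finset.sum_comm]

private theorem expand_chi {G : Type*} [AddCommGroup G] [Fintype G]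
    (f g : G → ℝ) (χ : AddChar G ℂ) (t : G) :
    ft f χ * ft g χ * (starRingEnd ℂ) (ft g χ) * χ (-t)
      = ∑ x : G, ∑ y : G, ∑ z : G,
          ((f x * g y * g z : ℝ) : ℂ) * χ (x + y - z - t) := by
  have hconj : (starRingEnd ℂ) (ft g χ) = ∑ z : G, ((g z : ℝ) : ℂ) * χ (-z) := by
    simp [ft, map_sum, AddChar.map_neg_eq_conj]
  rw [hconj, ft, ft, triple_expand]
  refine Finset.sum_congr rfl fun x _ => Finset.sum_congr rfl fun y _ =>
    Finset.sum_congr rfl fun z _ => ?_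
  have hx : χ (x + y - z - t) = χ x * χ y * χ (-z) * χ (-t) := by
    rw [sub_eq_add_neg, sub_eq_add_neg, AddChar.map_add_eq_mul, AddChar.map_add_eq_mul,
      AddChar.map_add_eq_mul]
  rw [hx]
  push_cast
  ring

private theorem ft_ind_one {G : Type*} [AddCommGroup G] [Fintype G] (A : Finset G) :
    ft (indR A) 1 = (A.card : ℂ) := by
  simp [ft, indR, AddChar.one_apply, apply_ite ((↑) : ℝ → ℂ), Finset.sum_boole]

-- swap a character sum inside
private theorem swap_char {G : Type*} [AddCommGroup G] [Fintype G]
    (F : AddChar G ℂ → G → ℂ) : (∑ χ : AddChar G ℂ, ∑ x : G, F χ x)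
      = ∑ x : G, ∑ χ : AddChar G ℂ, F χ x := Finset.sum_comm

/-- Parseval-type identity, complex form. -/
private theorem parseval_c {G : Type*} [AddCommGroup G] [Fintype G] (A : Finset G) :
    ∑ χ : AddChar G ℂ, ft (indR A) χ * (starRingEnd ℂ) (ft (indR A) χ)
      = (Fintype.card G : ℂ) * (A.card : ℂ) := by
  have h1 : ∀ χ : AddChar G ℂ, ft (indR A) χ * (starRingEnd ℂ) (ft (indR A) χ)
      = ∑ y : G, ∑ z : G, ((indR A y * indR A z : ℝ) : ℂ) * χ (y - z) := by
    intro χ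
    have hconj : (starRingEnd ℂ) (ft (indR A) χ) = ∑ z : G, ((indR A z : ℝ) : ℂ) * χ (-z) := by
      simp [ft, map_sum, AddChar.map_neg_eq_conj]
    rw [hconj, ft, Finset.sum_mul_sum]
    refine Finset.sum_congr rfl fun y _ => Finset.sum_congr rfl fun z _ => ?_
    have hx : χ (y - z) = χ y * χ (-z) := by
      rw [sub_eq_add_neg, AddChar.map_add_eq_mul]
    rw [hx]; push_cast; ring
  simp only [h1]
  rw [swap_char]
  have h2 : ∀ y : G, (∑ χ : AddChar G ℂ, ∑ z : G, ((indR A y * indR A z : ℝ) : ℂ) * χ (y - z))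
      = ∑ z : G, ∑ χ : AddChar G ℂ, ((indR A y * indR A z : ℝ) : ℂ) * χ (y - z) :=
    fun _ => Finset.sum_comm
  simp only [h2]
  have h3 : ∀ y z : G, (∑ χ : AddChar G ℂ, ((indR A y * indR A z : ℝ) : ℂ) * χ (y - z))
      = ((indR A y * indR A z : ℝ) : ℂ) * (if y - z = 0 then (Fintype.card G : ℂ) else 0) := by
    intro y z
    rw [← Finset.mul_sum, AddChar.sum_apply_eq_ite]
  simp only [h3, sub_eq_zero, mul_ite, mul_zero]
  simp only [Finset.sum_ite_eq, Finset.mem_univ, if_true]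
  have h5 : ∀ x : G, ((indR A x * indR A x : ℝ) : ℂ) * (Fintype.card G : ℂ)
      = if x ∈ A then (Fintype.card G : ℂ) else 0 := by
    intro x
    by_cases h : x ∈ A <;> simp [indR, h]
  simp only [h5]
  rw [Finset.sum_ite_mem, Finset.univ_inter, Finset.sum_const, nsmul_eq_mul, mul_comm]

/-- If `S` is nonempty and all non-principal Fourier coefficients of `1_S` are smaller than
`|S|·|B(Λ, ρ/2)|/N`, then `S` meets every translate of the Bohr neighborhood `B(Λ, ρ)`. -/
theorem test_set_meets_bohr_translates {G : Type*} [AddCommGroup G] [Fintype G] (N : ℕ)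
    (hN : Fintype.card G = N)
    (Λ : Finset (AddChar G ℂ)) (ρ : ℝ) (hρ : 0 < ρ)
    (S : Finset G) (hS : S.Nonempty)
    (hmax : ∀ χ : AddChar G ℂ, χ ≠ 1 →
      ‖ft (indR S) χ‖ < (S.card : ℝ) * ((bohr Λ (ρ / 2)).card : ℝ) / N) :
    ∀ t : G, ∃ x ∈ S, ∃ y ∈ bohr Λ ρ, x = t + y := by
  intro t
  classical
  set B' : Finset G := bohr Λ (ρ / 2) with hB'def
  set f : G → ℝ := indR S with hfdef
  set g : G → ℝ := indR B' with hgdef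
  clear_value B' f g
  have hNcard : 0 < N := by rw [← hN]; exact Fintype.card_pos
  have hNR : (0:ℝ) < (N:ℝ) := by exact_mod_cast hNcard
  have h0B : (0:G) ∈ B' := by
    simp only [hB'def, bohr, Finset.mem_filter, Finset.mem_univ, true_and]
    intro χ _
    simp [AddChar.map_zero_eq_one]
    positivity
  have hBpos : (0:ℝ) < (B'.card : ℝ) := by
    have : 0 < B'.card := Finset.card_pos.mpr ⟨0, h0B⟩
    exact_mod_cast this
  have hSpos : (0:ℝ) < (S.card : ℝ) := by
    have : 0 < S.card := Finset.card_pos.mpr hS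
    exact_mod_cast this
  set K : ℝ := (S.card : ℝ) * (B'.card : ℝ) / N with hKdef
  clear_value K
  have hKpos : 0 < K := by rw [hKdef]; positivity
  -- the real triple sum
  set T : ℝ := ∑ x : G, ∑ y : G, ∑ z : G,
      f x * g y * g z * (if x + y - z = t then 1 else 0) with hTdef
  clear_value T
  -- the complex quantity
  set L : ℂ := ∑ χ : AddChar G ℂ, ft f χ * ft g χ * (starRingEnd ℂ) (ft g χ) * χ (-t)
    with hLdef
  clear_value L
  -- main identity
  have claimA : L = (Fintype.card G : ℂ) * (T : ℂ) := by
    rw [hLdef]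
    have h1 : ∀ χ : AddChar G ℂ, ft f χ * ft g χ * (starRingEnd ℂ) (ft g χ) * χ (-t)
        = ∑ x : G, ∑ y : G, ∑ z : G, ((f x * g y * g z : ℝ) : ℂ) * χ (x + y - z - t) :=
      fun χ => expand_chi f g χ t
    simp only [h1]
    rw [swap_char]
    have h2 : ∀ x : G, (∑ χ : AddChar G ℂ, ∑ y : G, ∑ z : G,
        ((f x * g y * g z : ℝ) : ℂ) * χ (x + y - z - t))
        = ∑ y : G, ∑ χ : AddChar G ℂ, ∑ z : G,
        ((f x * g y * g z : ℝ) : ℂ) * χ (x + y - z - t) := fun _ => Finset.sum_comm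
    simp only [h2]
    have h3 : ∀ x y : G, (∑ χ : AddChar G ℂ, ∑ z : G,
        ((f x * g y * g z : ℝ) : ℂ) * χ (x + y - z - t))
        = ∑ z : G, ∑ χ : AddChar G ℂ,
        ((f x * g y * g z : ℝ) : ℂ) * χ (x + y - z - t) := fun _ _ => Finset.sum_comm
    simp only [h3]
    have h4 : ∀ x y z : G, (∑ χ : AddChar G ℂ,
        ((f x * g y * g z : ℝ) : ℂ) * χ (x + y - z - t))
        = ((f x * g y * g z : ℝ) : ℂ) * (if x + y - z - t = 0 then (Fintype.card G : ℂ) else 0) := by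
      intro x y z
      rw [← Finset.mul_sum, AddChar.sum_apply_eq_ite]
    simp only [h4, sub_eq_zero]
    rw [hTdef]
    push_cast
    rw [Finset.mul_sum]
    refine Finset.sum_congr rfl fun x _ => ?_
    rw [Finset.mul_sum]
    refine Finset.sum_congr rfl fun y _ => ?_
    rw [Finset.mul_sum]
    refine Finset.sum_congr rfl fun z _ => ?_
    by_cases h : x + y - z = t <;> simp [h] <;> ring
  -- Parseval, real form
  have parsR : ∑ χ : AddChar G ℂ, ‖ft g χ‖^2 = (Fintype.card G : ℝ) * B'.card := by
    have hc := parseval_c (G := G) B'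
    have h1 : ∀ χ : AddChar G ℂ, ft g χ * (starRingEnd ℂ) (ft g χ)
        = ((‖ft g χ‖^2 : ℝ) : ℂ) := by
      intro χ
      rw [Complex.mul_conj, Complex.sq_norm]
    rw [← hgdef] at hc
    simp only [h1] at hc
    rw [← Complex.ofReal_sum] at hc
    exact_mod_cast hc
  -- value at the trivial character
  have hft_f1 : ft f 1 = (S.card : ℂ) := by rw [hfdef]; exact ft_ind_one S
  have hft_g1 : ft g 1 = (B'.card : ℂ) := by rw [hgdef]; exact ft_ind_one B'
  have hterm1 : (ft f 1 * ft g 1 * (starRingEnd ℂ) (ft g 1) * (1 : AddChar G ℂ) (-t)).re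
      = (S.card : ℝ) * (B'.card : ℝ)^2 := by
    rw [hft_f1, hft_g1]
    simp [AddChar.one_apply]
    push_cast
    ring
  -- Parseval restricted to non-trivial characters
  have habs_g1 : ‖ft g 1‖^2 = (B'.card : ℝ)^2 := by
    rw [hft_g1]; simp
  have hparse_er : ∑ χ ∈ Finset.univ.erase (1 : AddChar G ℂ), ‖ft g χ‖^2
      = (Fintype.card G : ℝ) * B'.card - (B'.card : ℝ)^2 := by
    rw [Finset.sum_erase_eq_sub (Finset.mem_univ (1 : AddChar G ℂ)), parsR, habs_g1]
  -- lower bound for real part of L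
  have hLre : (N : ℝ) * T = L.re := by
    have h : L = (((N : ℝ) * T : ℝ) : ℂ) := by rw [claimA, hN]; push_cast; ring
    rw [h, Complex.ofReal_re]
  have hbound : K * (B'.card : ℝ)^2 ≤ L.re := by
    rw [hLdef, Complex.re_sum]
    rw [← Finset.add_sum_erase Finset.univ _ (Finset.mem_univ (1 : AddChar G ℂ))]
    have hNB : K * (N : ℝ) = (S.card : ℝ) * (B'.card : ℝ) := by
      rw [hKdef]; field_simp
    have hlow : ∀ χ ∈ Finset.univ.erase (1 : AddChar G ℂ),
        (-K) * ‖ft g χ‖^2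
          ≤ (ft f χ * ft g χ * (starRingEnd ℂ) (ft g χ) * χ (-t)).re := by
      intro χ hχ
      have hχ1 : χ ≠ 1 := (Finset.mem_erase.mp hχ).1
      have habs : ‖ft f χ * ft g χ * (starRingEnd ℂ) (ft g χ) * χ (-t)‖
          = ‖ft f χ‖ * ‖ft g χ‖^2 := by
        rw [norm_mul, norm_mul, norm_mul, Complex.norm_conj]
        have : ‖χ (-t)‖ = 1 := by
          exact AddChar.norm_apply χ (-t)
        rw [this]
        ring
      have h1 : -(‖ft f χ * ft g χ * (starRingEnd ℂ) (ft g χ) * χ (-t)‖)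
          ≤ (ft f χ * ft g χ * (starRingEnd ℂ) (ft g χ) * χ (-t)).re := by
        have := Complex.abs_re_le_norm (ft f χ * ft g χ * (starRingEnd ℂ) (ft g χ) * χ (-t))
        have := abs_le.mp this
        linarith [this.1]
      refine le_trans ?_ h1
      rw [habs]
      have : ‖ft f χ‖ * ‖ft g χ‖^2 ≤ K * ‖ft g χ‖^2 := by
        apply mul_le_mul_of_nonneg_right _ (sq_nonneg _)
        exact le_of_lt (hmax χ hχ1)
      linarith
    have hsum : ∑ χ ∈ Finset.univ.erase (1 : AddChar G ℂ),
        (-K) * ‖ft g χ‖^2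
        ≤ ∑ χ ∈ Finset.univ.erase (1 : AddChar G ℂ),
          (ft f χ * ft g χ * (starRingEnd ℂ) (ft g χ) * χ (-t)).re :=
      Finset.sum_le_sum hlow
    rw [← Finset.mul_sum, hparse_er] at hsum
    rw [hterm1]
    have hKN : K * ((Fintype.card G : ℝ) * B'.card) = (S.card : ℝ) * (B'.card : ℝ)^2 := by
      rw [hKdef, hN]
      field_simp
    have hexp : -K * ((Fintype.card G : ℝ) * (B'.card : ℝ) - (B'.card : ℝ)^2)
        = -((S.card : ℝ) * (B'.card : ℝ)^2) + K * (B'.card : ℝ)^2 := by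
      rw [← hKN]; ring
    linarith [hsum, hexp]
  have hTpos : 0 < T := by
    have h1 : 0 < L.re := lt_of_lt_of_le (by positivity) hbound
    rw [← hLre] at h1
    nlinarith
  rw [hTdef] at hTpos
  have h2 : ∑ x : G, (0:ℝ) < ∑ x : G, ∑ y : G, ∑ z : G,
      f x * g y * g z * (if x + y - z = t then 1 else 0) := by
    rw [Finset.sum_const_zero]; exact hTpos
  obtain ⟨x, -, hx⟩ := Finset.exists_lt_of_sum_lt h2
  have h3 : ∑ y : G, (0:ℝ) < ∑ y : G, ∑ z : G,
      f x * g y * g z * (if x + y - z = t then 1 else 0) := by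
    rw [Finset.sum_const_zero]; exact hx
  obtain ⟨y, -, hy⟩ := Finset.exists_lt_of_sum_lt h3
  have h4 : ∑ z : G, (0:ℝ) < ∑ z : G,
      f x * g y * g z * (if x + y - z = t then 1 else 0) := by
    rw [Finset.sum_const_zero]; exact hy
  obtain ⟨z, -, hz⟩ := Finset.exists_lt_of_sum_lt h4
  have hterm : 0 < f x * g y * g z * (if x + y - z = t then 1 else 0) := hz
  have hxS : x ∈ S := by
    by_contra h
    rw [hfdef] at hterm
    simp [indR, h] at hterm
  have hyB : y ∈ B' := by
    by_contra h
    rw [hgdef] at hterm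
    simp [indR, h] at hterm
  have hzB : z ∈ B' := by
    by_contra h
    rw [hgdef] at hterm
    simp [indR, h] at hterm
  have heq : x + y - z = t := by
    by_contra h
    simp [h] at hterm
  refine ⟨x, hxS, z - y, ?_, ?_⟩
  · simp only [bohr, Finset.mem_filter, Finset.mem_univ, true_and]
    intro χ hχ
    have hyb : ‖1 - χ y‖ ≤ ρ / 2 := by
      have := hyB
      rw [hB'def] at this
      simp only [bohr, Finset.mem_filter, Finset.mem_univ, true_and] at this
      exact this χ hχ
    have hzb : ‖1 - χ z‖ ≤ ρ / 2 := by
      have := hzB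
      rw [hB'def] at this
      simp only [bohr, Finset.mem_filter, Finset.mem_univ, true_and] at this
      exact this χ hχ
    have hnorm1 : ‖χ y‖ = 1 := by
      exact AddChar.norm_apply χ y
    have hyy : (starRingEnd ℂ) (χ y) * χ y = 1 := by
      rw [mul_comm, Complex.mul_conj, Complex.normSq_eq_norm_sq, hnorm1]
      norm_num
    have key : (1:ℂ) - χ (z - y) = (starRingEnd ℂ) (χ y) * (χ y - χ z) := by
      rw [sub_eq_add_neg z y, AddChar.map_add_eq_mul, AddChar.map_neg_eq_conj, mul_sub, hyy]
      ring
    have habs3 : ‖1 - χ (z - y)‖ = ‖χ y - χ z‖ := by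
      rw [key, norm_mul, Complex.norm_conj, hnorm1, one_mul]
    have htri : ‖χ y - χ z‖ ≤ ‖χ y - 1‖ + ‖1 - χ z‖ := by
      have : χ y - χ z = (χ y - 1) + (1 - χ z) := by ring
      rw [this]
      exact norm_add_le _ _
    have habs4 : ‖χ y - 1‖ = ‖1 - χ y‖ := norm_sub_rev _ _
    rw [habs3]
    calc ‖χ y - χ z‖ ≤ ‖χ y - 1‖ + ‖1 - χ z‖ := htri
      _ ≤ ρ / 2 + ρ / 2 := by rw [habs4]; exact add_le_add hyb hzb
      _ = ρ := by ring
  · rw [← heq]; abel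
end
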